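/- Let p be a prime, let G̃ and G be finite p-groups, let φ : G̃ → G be a surjective homomorphism, and suppose ((x,y,z),(a,b,c)) is an unmixed Beauville structure on G. Suppose x̃, ỹ, z̃ ∈ G̃ satisfy x̃*ỹ*z̃ = 1, generate G̃, map under φ to x, y, z respectively, and satisfy orderOf x̃ = orderOf x, orderOf ỹ = orderOf y, orderOf z̃ = orderOf z. Let ã, b̃ ∈ G̃ be arbitrary elements with φ(ã) = a and φ(b̃) = b, and set c̃ = (ã*b̃)⁻¹. Then ((x̃,ỹ,z̃),(ã,b̃,c̃)) is an unmixed Beauville structure on G̃. -/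

import Mathlib

open Subgroup


/-- In a finite `p`-group, every maximal subgroup contains all `p`-th powers and commutators. -/
lemma coatom_pow_comm {p : ℕ} (hp : p.Prime) {G : Type*} [Group G] [Finite G]
    (hG : IsPGroup p G) {M : Subgroup G} (hM : IsCoatom M) :
    (∀ g : G, g ^ p ∈ M) ∧ (∀ g h : G, g * h * g⁻¹ * h⁻¹ ∈ M) := by
  haveI := Fact.mk hp
  haveI : M.Normal := by
    have h1 : Group.IsNilpotent G := hG.isNilpotent
    exact NormalizerCondition.normal_of_coatom M normalizerCondition_of_isNilpotent hM
  set Q := G ⧸ M with hQ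
  have hQp : IsPGroup p Q := hG.to_quotient M
  have hQnt : Nontrivial Q := by
    rcases subsingleton_or_nontrivial Q with hs | hnt
    · exfalso
      apply hM.1
      ext g
      simp only [mem_top, iff_true]
      have : ((g : Q)) = 1 := Subsingleton.elim _ _
      exact (QuotientGroup.eq_one_iff g).mp this
    · exact hnt
  obtain ⟨q, hq1⟩ := exists_ne (1 : Q)
  -- q' has order exactly p
  have hopos : 0 < orderOf q := orderOf_pos q
  obtain ⟨k, hk⟩ := hQp q
  have hdvd : orderOf q ∣ p ^ k := orderOf_dvd_of_pow_eq_one hk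
  obtain ⟨m, hmk, hom⟩ := (Nat.dvd_prime_pow hp).mp hdvd
  have hm1 : 1 ≤ m := by
    rcases Nat.eq_zero_or_pos m with h0 | h
    · exfalso; rw [h0, pow_zero] at hom
      exact hq1 (orderOf_eq_one_iff.mp hom)
    · exact h
  set q' : Q := q ^ (p ^ (m - 1)) with hq'
  have hq'p : q' ^ p = 1 := by
    rw [hq', ← pow_mul, ← pow_succ, Nat.sub_add_cancel hm1, ← hom, pow_orderOf_eq_one]
  have hq'ne : q' ≠ 1 := by
    intro h
    have := orderOf_dvd_of_pow_eq_one (n := p ^ (m - 1)) (by rw [← hq', h])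
    rw [hom] at this
    have := Nat.le_of_dvd (pow_pos hp.pos _) this
    have hlt : p ^ (m - 1) < p ^ m := Nat.pow_lt_pow_right hp.one_lt (by omega)
    omega
  -- every element of Q is a power of q'
  have hgen : ∀ v : Q, v ∈ zpowers q' := by
    have hlt : M < comap (QuotientGroup.mk' M) (zpowers q') := by
      constructor
      · intro g hg
        have h1 : (QuotientGroup.mk' M) g = 1 := (QuotientGroup.eq_one_iff g).mpr hg
        exact mem_comap.mpr (by rw [h1]; exact one_mem _)
      · intro hle
        obtain ⟨g, hg⟩ := QuotientGroup.mk'_surjective M q'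
        have hgmem : g ∈ comap (QuotientGroup.mk' M) (zpowers q') := by
          simp only [mem_comap, hg]; exact mem_zpowers q'
        have := hle hgmem
        exact hq'ne (hg ▸ (QuotientGroup.eq_one_iff g).mpr this)
    have htop := hM.2 _ hlt
    intro v
    obtain ⟨g, hg⟩ := QuotientGroup.mk'_surjective M v
    have : g ∈ comap (QuotientGroup.mk' M) (zpowers q') := htop ▸ mem_top g
    simpa only [mem_comap, hg] using this
  have hppow : ∀ v : Q, v ^ p = 1 := by
    intro v
    obtain ⟨n, hn⟩ := mem_zpowers_iff.mp (hgen v)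
    rw [← hn, ← zpow_natCast, ← zpow_mul, mul_comm, zpow_mul, zpow_natCast, hq'p, one_zpow]
  have hcomm : ∀ v w : Q, v * w = w * v := by
    intro v w
    obtain ⟨n, hn⟩ := mem_zpowers_iff.mp (hgen v)
    obtain ⟨n', hn'⟩ := mem_zpowers_iff.mp (hgen w)
    rw [← hn, ← hn', ← zpow_add, ← zpow_add, add_comm]
  constructor
  · intro g
    have : (QuotientGroup.mk' M) (g ^ p) = 1 := by rw [map_pow]; exact hppow _
    exact (QuotientGroup.eq_one_iff _).mp this
  · intro g h
    have : (QuotientGroup.mk' M) (g * h * g⁻¹ * h⁻¹) = 1 := by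
      simp only [map_mul, map_inv]
      rw [hcomm ((QuotientGroup.mk' M) g) ((QuotientGroup.mk' M) h)]
      group
    exact (QuotientGroup.eq_one_iff _).mp this


lemma mem_frattini {G : Type*} [Group G] {g : G}
    (h : ∀ M : Subgroup G, IsCoatom M → g ∈ M) : g ∈ frattini G := by
  unfold frattini Order.radical
  simp only [Subgroup.mem_iInf]
  exact h

/-- In a finite p-group in which all elements are powers of `t`, a generating triple contains
a generator. -/
lemma exists_gen_of_triple {p : ℕ} (hp : p.Prime) {G : Type*} [Group G] [Finite G]
    (hG : IsPGroup p G) (t : G) (ht : ∀ g : G, g ∈ zpowers t) {x y z : G}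
    (hcl : Subgroup.closure ({x, y, z} : Set G) = ⊤) :
    ∃ u ∈ ({x, y, z} : Set G), zpowers u = ⊤ := by
  have hcomm : ∀ v w : G, v * w = w * v := by
    intro v w
    obtain ⟨n, hn⟩ := mem_zpowers_iff.mp (ht v)
    obtain ⟨n', hn'⟩ := mem_zpowers_iff.mp (ht w)
    rw [← hn, ← hn', ← zpow_add, ← zpow_add, add_comm]
  -- pick u among x, y, z of maximal order
  haveI := Fact.mk hp
  have key : ∃ u ∈ ({x, y, z} : Set G), orderOf x ∣ orderOf u ∧ orderOf y ∣ orderOf u ∧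
      orderOf z ∣ orderOf u := by
    obtain ⟨i, hi⟩ := (IsPGroup.iff_orderOf.mp hG x : ∃ k, orderOf x = p ^ k)
    obtain ⟨j, hj⟩ := (IsPGroup.iff_orderOf.mp hG y : ∃ k, orderOf y = p ^ k)
    obtain ⟨k, hk⟩ := (IsPGroup.iff_orderOf.mp hG z : ∃ k, orderOf z = p ^ k)
    rcases le_total i j with hij | hij <;> rcases le_total j k with hjk | hjk <;>
      rcases le_total i k with hik | hik
    all_goals first
      | (exact ⟨x, by simp, by rw [hi, hj, hk]; exact ⟨dvd_rfl, pow_dvd_pow p (by omega),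
          pow_dvd_pow p (by omega)⟩⟩)
      | (exact ⟨y, by simp, by rw [hi, hj, hk]; exact ⟨pow_dvd_pow p (by omega), dvd_rfl,
          pow_dvd_pow p (by omega)⟩⟩)
      | (exact ⟨z, by simp, by rw [hi, hj, hk]; exact ⟨pow_dvd_pow p (by omega),
          pow_dvd_pow p (by omega), dvd_rfl⟩⟩)
  obtain ⟨u, hu, hxu, hyu, hzu⟩ := key
  refine ⟨u, hu, ?_⟩
  -- every element of G satisfies g ^ orderOf u = 1
  have hall : ∀ g : G, g ^ orderOf u = 1 := by
    intro g
    have hg : g ∈ Subgroup.closure ({x, y, z} : Set G) := hcl ▸ mem_top g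
    induction hg using Subgroup.closure_induction with
    | mem w hw =>
      rcases hw with rfl | rfl | rfl
      · exact orderOf_dvd_iff_pow_eq_one.mp hxu
      · exact orderOf_dvd_iff_pow_eq_one.mp hyu
      · exact orderOf_dvd_iff_pow_eq_one.mp hzu
    | one => exact one_pow _
    | mul v w _ _ hv hw => rw [Commute.mul_pow (hcomm v w) _, hv, hw, mul_one]
    | inv v _ hv => rw [inv_pow, hv, inv_one]
  -- hence orderOf t divides orderOf u, so orderOf u = card G
  have h1 : Nat.card G ∣ orderOf u := by
    have := orderOf_dvd_of_pow_eq_one (hall t)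
    have htop : zpowers t = ⊤ := by rw [eq_top_iff']; exact ht
    calc Nat.card G = Nat.card (zpowers t) := by rw [htop]; exact (Nat.card_congr
          (Equiv.subtypeUnivEquiv (fun g => mem_top g))).symm
      _ = orderOf t := Nat.card_zpowers t
      _ ∣ orderOf u := this
  have h2 : orderOf u ∣ Nat.card G := orderOf_dvd_natCard u
  have : orderOf u = Nat.card G := Nat.dvd_antisymm h2 h1
  exact Subgroup.eq_top_of_card_eq _ (by rw [Nat.card_zpowers, this])

/-- A nontrivial finite p-group with all elements powers of one element admits no
Beauville-type condition pair. -/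
lemma no_beauville_cyclic {p : ℕ} (hp : p.Prime) {G : Type*} [Group G] [Finite G]
    [Nontrivial G] (hG : IsPGroup p G) (t : G) (ht : ∀ g : G, g ∈ zpowers t)
    {x y z a b c : G} (h1 : Subgroup.closure ({x, y, z} : Set G) = ⊤)
    (h2 : Subgroup.closure ({a, b, c} : Set G) = ⊤)
    (h5 : ∀ u ∈ ({x, y, z} : Set G), ∀ v ∈ ({a, b, c} : Set G), ∀ g : G, ∀ i j : ℤ,
      u ^ i = g * v ^ j * g⁻¹ → u ^ i = 1) : False := by
  obtain ⟨u, hu, hut⟩ := exists_gen_of_triple hp hG t ht h1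
  obtain ⟨v, hv, hvt⟩ := exists_gen_of_triple hp hG t ht h2
  obtain ⟨j, hj⟩ := mem_zpowers_iff.mp (hvt ▸ mem_top u : u ∈ zpowers v)
  have : u ^ (1 : ℤ) = 1 := h5 u hu v hv 1 1 j (by rw [zpow_one, one_mul, inv_one, mul_one, hj])
  rw [zpow_one] at this
  subst this
  obtain ⟨g, hg⟩ := exists_ne (1 : G)
  obtain ⟨n, hn⟩ := mem_zpowers_iff.mp (hut ▸ mem_top g : g ∈ zpowers (1 : G))
  rw [one_zpow] at hn
  exact hg hn.symm

/-- key: kernel is contained in the Frattini subgroup -/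
lemma ker_le_frattini {p : ℕ} (hp : p.Prime) {G' G : Type*} [Group G'] [Group G]
    [Finite G'] [Finite G] (hG' : IsPGroup p G') (hG : IsPGroup p G)
    (φ : G' →* G) (hφ : Function.Surjective φ)
    (hnc : ∀ t : G, ¬ (∀ g : G, g ∈ zpowers t))
    {x' y' : G'} (hgen2 : Subgroup.closure ({x', y'} : Set G') = ⊤) :
    φ.ker ≤ frattini G' := by
  haveI := Fact.mk hp
  set Φ := frattini G' with hΦdef
  have hppow : ∀ g : G', g ^ p ∈ Φ := fun g =>
    mem_frattini (fun M hM => (coatom_pow_comm hp hG' hM).1 g)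
  have hcommut : ∀ g h : G', g * h * g⁻¹ * h⁻¹ ∈ Φ := fun g h =>
    mem_frattini (fun M hM => (coatom_pow_comm hp hG' hM).2 g h)
  set V := G' ⧸ Φ with hVdef
  set π := QuotientGroup.mk' Φ with hπdef
  have hπs : Function.Surjective π := QuotientGroup.mk'_surjective Φ
  -- V is abelian of exponent p
  have hVpow : ∀ v : V, v ^ p = 1 := by
    intro v
    obtain ⟨g, rfl⟩ := hπs v
    rw [← map_pow]
    exact (QuotientGroup.eq_one_iff _).mpr (hppow g)
  have hVcomm : ∀ v w : V, v * w = w * v := by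
    intro v w
    obtain ⟨g, rfl⟩ := hπs v
    obtain ⟨h, rfl⟩ := hπs w
    have key : π ((h * g)⁻¹ * (g * h)) = 1 := by
      refine (QuotientGroup.eq_one_iff _).mpr ?_
      have := hcommut g⁻¹ h⁻¹
      simpa [mul_assoc] using this
    have h2 : (π (h * g))⁻¹ * π (g * h) = 1 := by rw [← map_inv, ← map_mul]; exact key
    rw [← map_mul, ← map_mul]
    exact (inv_mul_eq_one.mp h2).symm
  -- V is generated by two elements, so |V| ≤ p^2
  have hVgen : Subgroup.closure ({π x', π y'} : Set V) = ⊤ := by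
    have : Subgroup.map π (Subgroup.closure ({x', y'} : Set G')) = ⊤ := by
      rw [hgen2, ← MonoidHom.range_eq_map, MonoidHom.range_eq_top]
      exact hπs
    rwa [MonoidHom.map_closure, Set.image_insert_eq, Set.image_singleton] at this
  have hVcard : Nat.card V ≤ p ^ 2 := by
    have hsurj : Function.Surjective
        (fun mn : ZMod p × ZMod p => (π x') ^ (mn.1.val) * (π y') ^ (mn.2.val)) := by
      intro v
      have hv : v ∈ Subgroup.closure ({π x', π y'} : Set V) := hVgen ▸ mem_top v
      have hform : ∃ m n : ℕ, v = (π x') ^ m * (π y') ^ n := by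
        induction hv using Subgroup.closure_induction with
        | mem w hw =>
          rcases hw with rfl | rfl
          · exact ⟨1, 0, by simp⟩
          · exact ⟨0, 1, by simp⟩
        | one => exact ⟨0, 0, by simp⟩
        | mul v w _ _ hv hw =>
          obtain ⟨m, n, rfl⟩ := hv
          obtain ⟨m', n', rfl⟩ := hw
          refine ⟨m + m', n + n', ?_⟩
          have hc : (π y') ^ n * (π x') ^ m' = (π x') ^ m' * (π y') ^ n := hVcomm _ _
          rw [pow_add, pow_add]
          calc (π x')^m * (π y')^n * ((π x')^m' * (π y')^n')
              = (π x')^m * ((π y')^n * (π x')^m') * (π y')^n' := by group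
            _ = (π x')^m * ((π x')^m' * (π y')^n) * (π y')^n' := by rw [hc]
            _ = (π x')^m * (π x')^m' * ((π y')^n * (π y')^n') := by group
        | inv v _ hv =>
          obtain ⟨m, n, rfl⟩ := hv
          refine ⟨m * (p - 1), n * (p - 1), ?_⟩
          have h1 : ∀ w : V, w⁻¹ = w ^ (p - 1) := by
            intro w
            have : w * w ^ (p - 1) = 1 := by
              rw [← pow_succ', Nat.sub_add_cancel hp.one_le]
              exact hVpow w
            exact inv_eq_of_mul_eq_one_right this
          have hc : ((π x')^m * (π y')^n)⁻¹ = ((π x')^m)⁻¹ * ((π y')^n)⁻¹ := by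
            rw [mul_inv_rev, hVcomm]
          rw [hc, h1 ((π x')^m), h1 ((π y')^n), ← pow_mul, ← pow_mul]
      obtain ⟨m, n, rfl⟩ := hform
      refine ⟨((m : ZMod p), (n : ZMod p)), ?_⟩
      have hred : ∀ (w : V) (k : ℕ), w ^ p = 1 → w ^ (k : ZMod p).val = w ^ k := by
        intro w k hw
        conv_rhs => rw [← Nat.div_add_mod k p, pow_add, pow_mul, hw, one_pow, one_mul]
        congr 1
        exact ZMod.val_natCast p k
      simp only
      rw [hred _ m (hVpow _), hred _ n (hVpow _)]
    calc Nat.card V ≤ Nat.card (ZMod p × ZMod p) := Nat.card_le_card_of_surjective _ hsurj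
      _ = p ^ 2 := by
        haveI : NeZero p := ⟨hp.ne_zero⟩
        rw [Nat.card_prod, Nat.card_zmod, sq]
  -- Now consider W = G / φ(Φ)
  set N := Subgroup.map φ Φ with hNdef
  haveI hNn : N.Normal := Subgroup.Normal.map inferInstance φ hφ
  set W := G ⧸ N with hWdef
  set χ : G' →* W := (QuotientGroup.mk' N).comp φ with hχdef
  have hχs : Function.Surjective χ := (QuotientGroup.mk'_surjective N).comp hφ
  have hker : χ.ker = Φ ⊔ φ.ker := by
    rw [hχdef, ← MonoidHom.comap_ker, QuotientGroup.ker_mk', hNdef, Subgroup.comap_map_eq]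
  have hΦle : Φ ≤ χ.ker := hker ▸ le_sup_left
  -- W is a p-group
  have hWp : IsPGroup p W := hG.to_quotient N
  obtain ⟨n, hn⟩ := IsPGroup.iff_card.mp hWp
  -- W is not "cyclic"
  have hn2 : 2 ≤ n := by
    by_contra hlt
    push_neg at hlt
    have hWcyc : IsCyclic W := by
      interval_cases n
      · rw [pow_zero] at hn
        haveI : Subsingleton W := (Nat.card_eq_one_iff_unique.mp hn).1
        infer_instance
      · rw [pow_one] at hn
        exact isCyclic_of_prime_card hn
    obtain ⟨w, hw⟩ := IsCyclic.exists_generator (α := W)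
    obtain ⟨g, hg⟩ := (QuotientGroup.mk'_surjective N) w
    -- comap φ (zpowers g) ⊔ Φ = ⊤
    have htop : Subgroup.comap φ (zpowers g) ⊔ Φ = ⊤ := by
      rw [eq_top_iff']
      intro s
      obtain ⟨m, hm⟩ := mem_zpowers_iff.mp (hw ((QuotientGroup.mk' N) (φ s)))
      have hmem : (g ^ m)⁻¹ * φ s ∈ N := by
        rw [← QuotientGroup.ker_mk' N]
        have : (QuotientGroup.mk' N) ((g ^ m)⁻¹ * φ s) = 1 := by
          rw [map_mul, map_inv, map_zpow, hg, hm, inv_mul_cancel]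
        exact this
      obtain ⟨f, hfΦ, hf⟩ := Subgroup.mem_map.mp hmem
      have hsf : s * f⁻¹ ∈ Subgroup.comap φ (zpowers g) := by
        rw [mem_comap, map_mul, map_inv, hf, mul_inv_rev, inv_inv, ← mul_assoc,
          mul_inv_cancel, one_mul]
        exact zpow_mem (mem_zpowers g) m
      have hfin : s * f⁻¹ * f ∈ Subgroup.comap φ (zpowers g) ⊔ Φ := mul_mem_sup hsf hfΦ
      rwa [inv_mul_cancel_right] at hfin
    have := frattini_nongenerating htop
    have hzg : ∀ h : G, h ∈ zpowers g := by
      intro h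
      obtain ⟨s, rfl⟩ := hφ h
      have : s ∈ Subgroup.comap φ (zpowers g) := this ▸ mem_top s
      exact mem_comap.mp this
    exact hnc g hzg
  -- cardinality comparison
  have hWcard : p ^ 2 ≤ Nat.card W := hn ▸ Nat.pow_le_pow_right hp.pos hn2
  have hcard1 : Nat.card G' = Nat.card V * Nat.card Φ :=
    Subgroup.card_eq_card_quotient_mul_card_subgroup Φ
  have hcard2 : Nat.card G' = Nat.card W * Nat.card χ.ker := by
    have e := QuotientGroup.quotientKerEquivOfSurjective χ hχs
    rw [Subgroup.card_eq_card_quotient_mul_card_subgroup χ.ker, Nat.card_congr e.toEquiv]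
  have hΦcard : Nat.card Φ ≤ Nat.card χ.ker := Subgroup.card_le_of_le hΦle
  have hWpos : 0 < Nat.card W := Nat.card_pos
  have hkerle : Nat.card χ.ker ≤ Nat.card Φ := by
    have : Nat.card W * Nat.card χ.ker ≤ Nat.card W * Nat.card Φ := by
      calc Nat.card W * Nat.card χ.ker = Nat.card V * Nat.card Φ := by rw [← hcard2, hcard1]
        _ ≤ p ^ 2 * Nat.card Φ := Nat.mul_le_mul_right _ hVcard
        _ ≤ Nat.card W * Nat.card Φ := Nat.mul_le_mul_right _ hWcard
    exact Nat.le_of_mul_le_mul_left this hWpos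
  have hkerΦ : Φ = χ.ker := Subgroup.eq_of_le_of_card_ge hΦle hkerle
  have : φ.ker ≤ χ.ker := hker ▸ le_sup_right
  rwa [← hkerΦ] at this


def IsBeauvilleStructure {G : Type*} [Group G] (x y z a b c : G) : Prop :=
  x * y * z = 1 ∧ a * b * c = 1 ∧
  Subgroup.closure {x, y, z} = ⊤ ∧ Subgroup.closure {a, b, c} = ⊤ ∧
  ∀ u ∈ ({x, y, z} : Set G), ∀ v ∈ ({a, b, c} : Set G), ∀ g : G, ∀ i j : ℤ,
    u ^ i = g * v ^ j * g⁻¹ → u ^ i = 1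

/-- Triangle group lifting of Beauville structures for finite `p`-groups:
the second half may be lifted arbitrarily. -/
theorem beauville_lift_pGroup
    {p : ℕ} (hp : p.Prime)
    {G' G : Type*} [Group G'] [Group G] [Finite G'] [Finite G]
    (hG' : IsPGroup p G') (hG : IsPGroup p G)
    (φ : G' →* G) (hφ : Function.Surjective φ)
    (x y z a b c : G) (hB : IsBeauvilleStructure x y z a b c)
    (x' y' z' : G') (hxyz : x' * y' * z' = 1)
    (hgen : Subgroup.closure ({x', y', z'} : Set G') = ⊤)
    (hφx : φ x' = x) (hφy : φ y' = y) (hφz : φ z' = z)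
    (hox : orderOf x' = orderOf x) (hoy : orderOf y' = orderOf y)
    (hoz : orderOf z' = orderOf z)
    (a' b' : G') (hφa : φ a' = a) (hφb : φ b' = b) :
    IsBeauvilleStructure x' y' z' a' b' (a' * b')⁻¹ := by
  haveI := Fact.mk hp
  obtain ⟨hB1, hB2, hB3, hB4, hB5⟩ := hB
  have hc : c = (a * b)⁻¹ := eq_inv_of_mul_eq_one_right hB2
  have hφc : φ ((a' * b')⁻¹) = c := by rw [map_inv, map_mul, hφa, hφb, hc]
  refine ⟨hxyz, mul_inv_cancel _, hgen, ?_, ?_⟩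
  · -- generation of the second triple
    rcases subsingleton_or_nontrivial G with hG0 | hG0
    · -- G is trivial, hence so is G'
      have h1 : ∀ w' : G', ∀ w : G, φ w' = w → orderOf w' = orderOf w → w' = 1 := by
        intro w' w h1 h2
        refine orderOf_eq_one_iff.mp ?_
        rw [h2, show w = 1 from Subsingleton.elim w 1, orderOf_one]
      have hx1 := h1 x' x hφx hox
      have hy1 := h1 y' y hφy hoy
      have hz1 := h1 z' z hφz hoz
      have hbot : (⊥ : Subgroup G') = ⊤ := by
        rw [← hgen, hx1, hy1, hz1]
        simp [Subgroup.closure_singleton_one]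
      exact eq_top_iff.mpr (hbot ▸ bot_le)
    · -- G nontrivial
      have hnc : ∀ t : G, ¬ (∀ g : G, g ∈ zpowers t) := fun t ht =>
        no_beauville_cyclic hp hG t ht hB3 hB4 hB5
      have hz'eq : z' = (x' * y')⁻¹ := eq_inv_of_mul_eq_one_right hxyz
      have hgen2 : Subgroup.closure ({x', y'} : Set G') = ⊤ := by
        rw [eq_top_iff, ← hgen]
        refine Subgroup.closure_le _ |>.mpr ?_
        rintro w (rfl | rfl | rfl)
        · exact Subgroup.subset_closure (by simp)
        · exact Subgroup.subset_closure (by simp)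
        · rw [hz'eq]
          exact inv_mem (mul_mem (Subgroup.subset_closure (by simp))
            (Subgroup.subset_closure (by simp)))
      have hker := ker_le_frattini hp hG' hG φ hφ hnc hgen2
      set H := Subgroup.closure ({a', b', (a' * b')⁻¹} : Set G') with hHdef
      have hmap : Subgroup.map φ H = ⊤ := by
        rw [hHdef, MonoidHom.map_closure, Set.image_insert_eq, Set.image_insert_eq,
          Set.image_singleton, hφa, hφb, hφc]
        exact hB4
      have hsup : H ⊔ φ.ker = ⊤ := by
        rw [← Subgroup.comap_map_eq, hmap, Subgroup.comap_top]
      have htop : H ⊔ frattini G' = ⊤ :=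
        eq_top_iff.mpr (hsup ▸ sup_le_sup_left hker H)
      exact frattini_nongenerating htop
  · -- the conjugation condition
    intro u' hu' v' hv' g i j hconj
    have hu : φ u' ∈ ({x, y, z} : Set G) ∧ orderOf u' = orderOf (φ u') := by
      rcases hu' with rfl | rfl | rfl
      · exact ⟨by rw [hφx]; simp, by rw [hφx]; exact hox⟩
      · exact ⟨by rw [hφy]; simp, by rw [hφy]; exact hoy⟩
      · exact ⟨by rw [hφz]; simp, by rw [hφz]; exact hoz⟩
    have hv : φ v' ∈ ({a, b, c} : Set G) := by
      rcases hv' with rfl | rfl | rfl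
      · rw [hφa]; simp
      · rw [hφb]; simp
      · rw [hφc]; simp
    have h1 : (φ u') ^ i = φ g * (φ v') ^ j * (φ g)⁻¹ := by
      have := congrArg φ hconj
      simpa [map_mul, map_zpow, map_inv] using this
    have h0 : (φ u') ^ i = 1 := hB5 (φ u') hu.1 (φ v') hv (φ g) i j h1
    have hdvd : (orderOf (φ u') : ℤ) ∣ i := orderOf_dvd_iff_zpow_eq_one.mpr h0
    rw [← hu.2] at hdvd
    exact orderOf_dvd_iff_zpow_eq_one.mp hdvd
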